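/- Let B be a bialgebra over a field k which is a finite centralizing extension of a subalgebra A, and let A⁺ = A ∩ ker ε be the augmentation ideal of A. Then B·A⁺ = A⁺·B, the ideal B·A⁺ is contained in ker ε, and the quotient algebra B/B·A⁺ is finite dimensional over k. -/
import Mathlib


/-- let `B` be a bialgebra which is a finite centralizing extension of a
subalgebra `A`, and let `A⁺ = A ∩ ker ε`.  Then `B·A⁺ = A⁺·B`, the ideal `B·A⁺` is contained
in `ker ε`, and `B/B·A⁺` is finite dimensional over `k`. -/
theorem finite_centralizing_bialgebra_augmentation {k B : Type*}
    [Field k] [Ring B] [Bialgebra k B] (A : Subalgebra k B)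
    (s : ℕ) (r : Fin (s + 1) → B)
    (hcent : ∀ i, ∀ u : A, (u : B) * r i = r i * (u : B))
    (hgen : ∀ x : B, ∃ a : Fin (s + 1) → A, x = ∑ i, (a i : B) * r i) :
    Submodule.span k {x : B | ∃ b a : B, a ∈ A ∧ Coalgebra.counit (R := k) a = 0 ∧ x = b * a}
      = Submodule.span k
        {x : B | ∃ b a : B, a ∈ A ∧ Coalgebra.counit (R := k) a = 0 ∧ x = a * b} ∧
    Submodule.span k {x : B | ∃ b a : B, a ∈ A ∧ Coalgebra.counit (R := k) a = 0 ∧ x = b * a}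
      ≤ LinearMap.ker (Coalgebra.counit (R := k) (A := B)) ∧
    FiniteDimensional k
      (B ⧸ Submodule.span k
        {x : B | ∃ b a : B, a ∈ A ∧ Coalgebra.counit (R := k) a = 0 ∧ x = b * a}) := by
  set S1 : Set B := {x : B | ∃ b a : B, a ∈ A ∧ Coalgebra.counit (R := k) a = 0 ∧ x = b * a}
    with hS1
  set S2 : Set B := {x : B | ∃ b a : B, a ∈ A ∧ Coalgebra.counit (R := k) a = 0 ∧ x = a * b}
    with hS2
  -- Part 1: span S1 = span S2
  have h12 : Submodule.span k S1 ≤ Submodule.span k S2 := by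
    rw [Submodule.span_le]
    rintro x ⟨b, a, haA, ha0, rfl⟩
    obtain ⟨c, rfl⟩ := hgen b
    rw [Finset.sum_mul]
    refine Submodule.sum_mem _ fun i _ => Submodule.subset_span ?_
    refine ⟨r i, (c i : B) * a, mul_mem (c i).2 haA, ?_, ?_⟩
    · rw [Bialgebra.counit_mul, ha0, mul_zero]
    · rw [mul_assoc, ← hcent i ⟨a, haA⟩, ← mul_assoc]
  have h21 : Submodule.span k S2 ≤ Submodule.span k S1 := by
    rw [Submodule.span_le]
    rintro x ⟨b, a, haA, ha0, rfl⟩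
    obtain ⟨c, rfl⟩ := hgen b
    rw [Finset.mul_sum]
    refine Submodule.sum_mem _ fun i _ => Submodule.subset_span ?_
    refine ⟨r i, a * (c i : B), mul_mem haA (c i).2, ?_, ?_⟩
    · rw [Bialgebra.counit_mul, ha0, zero_mul]
    · rw [← mul_assoc, hcent i ⟨a * (c i : B), mul_mem haA (c i).2⟩]
  refine ⟨le_antisymm h12 h21, ?_, ?_⟩
  -- Part 2: span S1 ≤ ker ε
  · rw [Submodule.span_le]
    rintro x ⟨b, a, haA, ha0, rfl⟩
    simp [LinearMap.mem_ker, Bialgebra.counit_mul, ha0]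
  -- Part 3: finite dimensionality
  · set I := Submodule.span k S1 with hI
    have hspan : Submodule.span k
        (Set.range fun i => Submodule.Quotient.mk (p := I) (r i)) = ⊤ := by
      rw [eq_top_iff]
      rintro x -
      obtain ⟨b, rfl⟩ := Submodule.Quotient.mk_surjective I x
      obtain ⟨c, rfl⟩ := hgen b
      rw [show Submodule.Quotient.mk (p := I) (∑ i, (c i : B) * r i) = ∑ i, Submodule.Quotient.mk (p := I) ((c i : B) * r i) from map_sum (I.mkQ) _ _]
      refine Submodule.sum_mem _ fun i _ => ?_
      have key : (c i : B) * r i - Coalgebra.counit (R := k) (c i : B) • r i ∈ I := by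
        have hmem : ((c i : B) - algebraMap k B (Coalgebra.counit (R := k) (c i : B))) ∈ A :=
          sub_mem (c i).2 (A.algebraMap_mem _)
        refine Submodule.subset_span ⟨r i, _, hmem, ?_, ?_⟩
        · rw [map_sub, Bialgebra.counit_algebraMap, sub_self]
        · rw [← hcent i ⟨_, hmem⟩, sub_mul, Algebra.algebraMap_eq_smul_one, smul_mul_assoc,
            one_mul]
      have : Submodule.Quotient.mk (p := I) ((c i : B) * r i)
          = Coalgebra.counit (R := k) (c i : B) • Submodule.Quotient.mk (p := I) (r i) := by
        rw [← Submodule.Quotient.mk_smul, Submodule.Quotient.eq]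
        exact key
      rw [this]
      exact Submodule.smul_mem _ _ (Submodule.subset_span ⟨i, rfl⟩)
    exact ⟨hspan ▸ Submodule.fg_span (Set.finite_range _)⟩
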